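/- Let g be the free pre-Lie algebra of rooted trees decorated by J ⊆ ℕ* (with pre-Lie product t ∘ t' = sum of all graftings of t onto vertices of t') and φ: g → g_FdB the unique pre-Lie morphism sending the single-vertex tree •_j to e_j, where g_FdB has product e_i∘e_j = (λj−μ)e_{i+j}. Then for every decorated rooted tree t, φ(t) = μ_t e_{|t|} for some scalar μ_t, where |t| is the sum of the decorations of the vertices of t, and μ_t satisfies: μ_{•_j} = 1, and if t = B_j(t_1⋯t_m) then μ_t = μ_{t_1}⋯μ_{t_m} · (λj−μ)(λj)(λj+μ)⋯(λj+(m−2)μ). -/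

import Mathlib

/-- Rooted trees with vertices decorated by `D` (a root decoration and a list of subtrees). -/
inductive RT (D : Type*) : Type _
  | node : D → List (RT D) → RT D

namespace RT

variable {D : Type*}

mutual
  /-- The degree of a decorated rooted tree: the sum of the (positive integer) degrees of
  the decorations of its vertices. -/
  def degN (w : D → ℕ+) : RT D → ℕ
    | .node j c => (w j : ℕ) + degListN w c
  /-- Sum of degrees of a list of trees. -/
  def degListN (w : D → ℕ+) : List (RT D) → ℕ
    | [] => 0
    | t :: ts => degN w t + degListN w ts
end

theorem degN_pos (w : D → ℕ+) : ∀ t : RT D, 0 < degN w t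
  | .node j c => by
      rw [degN]
      exact Nat.lt_of_lt_of_le (w j).2 (Nat.le_add_right _ _)

/-- The degree of a decorated rooted tree, as a positive integer. -/
def deg (w : D → ℕ+) (t : RT D) : ℕ+ := ⟨degN w t, degN_pos w t⟩

mutual
  /-- The list of all graftings of the tree `t` on the vertices of the tree `s`. -/
  def graftings (t : RT D) : RT D → List (RT D)
    | .node j c => RT.node j (t :: c) :: (graftingsList t c).map fun c' => RT.node j c'
  /-- All ways to graft `t` on a vertex of one of the trees of a list (forest). -/
  def graftingsList (t : RT D) : List (RT D) → List (List (RT D))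
    | [] => []
    | s :: rest => ((graftings t s).map fun s' => s' :: rest) ++
        ((graftingsList t rest).map fun rest' => s :: rest')
end

end RT

/-- The pre-Lie product of the free pre-Lie algebra `g_CK^J` on rooted trees decorated by `J`
(`t ∘ t' = Σ` of all graftings of `t` on the vertices of `t'`), extended bilinearly to the span
of trees. -/
noncomputable def gprod {D : Type*} (K : Type*) [Field K] (x y : RT D →₀ K) : RT D →₀ K :=
  x.sum fun t a => y.sum fun s b =>
    (a * b) • ((RT.graftings t s).map fun u => Finsupp.single u (1 : K)).sum

/-- The Faà di Bruno pre-Lie algebra: basis `(e_i)_{i≥1}`, product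
`e_i ∘ e_j = (λ j − μ) e_{i+j}`. -/
noncomputable def fdbMul (K : Type*) [Field K] (lam mu : K) (x y : ℕ+ →₀ K) : ℕ+ →₀ K :=
  x.sum fun i a => y.sum fun j b => Finsupp.single (i + j) (a * b * (lam * ((j : ℕ) : K) - mu))

namespace PhiAux

open RT Finsupp

variable {D : Type*} {K : Type*} [Field K]

lemma gprod_single (t s : RT D) :
    gprod K (Finsupp.single t (1:K)) (Finsupp.single s 1)
      = ((RT.graftings t s).map fun u => Finsupp.single u (1:K)).sum := by
  simp [gprod, Finsupp.sum_single_index]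

lemma fdbMul_single (lam mu : K) (i j : ℕ+) (a b : K) :
    fdbMul K lam mu (Finsupp.single i a) (Finsupp.single j b)
      = Finsupp.single (i + j) (a * b * (lam * ((j:ℕ):K) - mu)) := by
  simp [fdbMul, Finsupp.sum_single_index]

lemma sum_map_single {α : Type*} (i : ℕ+) (L : List α) (g : α → K) :
    (L.map fun a => Finsupp.single i (g a)).sum
      = Finsupp.single i ((L.map g).sum) := by
  induction L with
  | nil => simp
  | cons a l ih => simp [ih, Finsupp.single_add]

end PhiAux
namespace PhiAux2
open RT

variable {D : Type*} {K : Type*} [Field K]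

mutual
  theorem degN_graftings (w : D → ℕ+) (t : RT D) :
      ∀ s : RT D, ∀ u ∈ RT.graftings t s, RT.degN w u = RT.degN w t + RT.degN w s
    | .node j c, u, hu => by
        rw [RT.graftings] at hu
        rcases List.mem_cons.mp hu with rfl | hu
        · simp only [RT.degN, RT.degListN]; omega
        · obtain ⟨c', hc', rfl⟩ := List.mem_map.mp hu
          have := degListN_graftingsList w t c c' hc'
          simp only [RT.degN]; omega
  theorem degListN_graftingsList (w : D → ℕ+) (t : RT D) :
      ∀ c : List (RT D), ∀ c' ∈ RT.graftingsList t c,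
        RT.degListN w c' = RT.degN w t + RT.degListN w c
    | s :: rest, c', h => by
        rw [RT.graftingsList] at h
        rcases List.mem_append.mp h with h | h
        · obtain ⟨u, hu, rfl⟩ := List.mem_map.mp h
          have := degN_graftings w t s u hu
          simp only [RT.degListN]; omega
        · obtain ⟨r, hr, rfl⟩ := List.mem_map.mp h
          have := degListN_graftingsList w t rest r hr
          simp only [RT.degListN]; omega
end

/-- number of children of the root -/
def rootLen : RT D → ℕ
  | .node _ c => c.length

theorem length_le_degListN (w : D → ℕ+) : ∀ c : List (RT D), c.length ≤ RT.degListN w c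
  | [] => le_refl _
  | t :: ts => by
      have h1 := RT.degN_pos w t
      have h2 := length_le_degListN w ts
      simp only [List.length_cons, RT.degListN]; omega

theorem rootLen_lt_degN (w : D → ℕ+) : ∀ t : RT D, rootLen t < RT.degN w t
  | .node j c => by
      have h1 := length_le_degListN w c
      have h2 : 0 < ((w j : ℕ+) : ℕ) := (w j).pos
      simp only [rootLen, RT.degN]; omega

end PhiAux2
namespace PhiAux3
open RT

variable {D : Type*} {K : Type*} [Field K]

lemma sum_map_mul_right {α : Type*} (L : List α) (f : α → K) (r : K) :
    (L.map fun a => f a * r).sum = (L.map f).sum * r := by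
  induction L with
  | nil => simp
  | cons a l ih => simp [ih, add_mul]

lemma sum_map_mul_left {α : Type*} (L : List α) (f : α → K) (r : K) :
    (L.map fun a => r * f a).sum = r * (L.map f).sum := by
  induction L with
  | nil => simp
  | cons a l ih => simp [ih, mul_add]

theorem length_graftingsList (t : RT D) :
    ∀ c : List (RT D), ∀ c' ∈ RT.graftingsList t c, c'.length = c.length
  | s :: rest, c', h => by
      rw [RT.graftingsList] at h
      rcases List.mem_append.mp h with h | h
      · obtain ⟨u, _, rfl⟩ := List.mem_map.mp h
        simp
      · obtain ⟨r, hr, rfl⟩ := List.mem_map.mp h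
        have := length_graftingsList t rest r hr
        simp [this]

/-- `(λx−μ)(λx)(λx+μ)⋯(λx+(m−2)μ)` -/
noncomputable def prodP (lam mu x : K) (m : ℕ) : K :=
  ∏ k ∈ Finset.range m, (lam * x + ((k : K) - 1) * mu)

theorem prodP_succ (lam mu x : K) (m : ℕ) :
    prodP lam mu x (m + 1) = prodP lam mu x m * (lam * x + ((m : K) - 1) * mu) := by
  rw [prodP, Finset.prod_range_succ]; rfl

mutual
  /-- the scalar `μ_t` -/
  noncomputable def Mf (lam mu : K) (w : D → ℕ+) : RT D → K
    | .node j c => MfList lam mu w c * prodP lam mu (((w j : ℕ+) : ℕ) : K) c.length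
  noncomputable def MfList (lam mu : K) (w : D → ℕ+) : List (RT D) → K
    | [] => 1
    | t :: ts => Mf lam mu w t * MfList lam mu w ts
end

theorem MfList_eq_prod (lam mu : K) (w : D → ℕ+) (c : List (RT D)) :
    MfList lam mu w c = (c.map (Mf lam mu w)).prod := by
  induction c with
  | nil => simp [MfList]
  | cons t ts ih => rw [MfList, ih]; simp

mutual
  theorem sum_Mf_graftings (lam mu : K) (w : D → ℕ+) (t : RT D) :
      ∀ s : RT D, ((RT.graftings t s).map (Mf lam mu w)).sum
        = Mf lam mu w t * Mf lam mu w s * (lam * ((RT.degN w s : ℕ) : K) - mu)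
    | .node j c => by
        have hGL := sum_MfList_graftingsList lam mu w t c
        rw [RT.graftings]
        simp only [List.map_cons, List.map_map, List.sum_cons]
        have hcomp : ((RT.graftingsList t c).map ((Mf lam mu w) ∘ fun c' => RT.node j c'))
            = ((RT.graftingsList t c).map
                (fun c' => MfList lam mu w c' * prodP lam mu (((w j : ℕ+) : ℕ) : K) c.length)) := by
          refine List.map_congr_left (fun c' hc' => ?_)
          have hl : c'.length = c.length := length_graftingsList t c c' hc'
          simp only [Function.comp_apply, Mf, hl]
        rw [hcomp, sum_map_mul_right, hGL]
        show Mf lam mu w (RT.node j (t :: c)) + _ = _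
        rw [Mf, Mf, MfList, RT.degN, List.length_cons, prodP_succ]
        push_cast
        ring
  theorem sum_MfList_graftingsList (lam mu : K) (w : D → ℕ+) (t : RT D) :
      ∀ c : List (RT D), ((RT.graftingsList t c).map (MfList lam mu w)).sum
        = Mf lam mu w t * MfList lam mu w c
            * (lam * ((RT.degListN w c : ℕ) : K) - (c.length : K) * mu)
    | [] => by simp [RT.graftingsList, RT.degListN, MfList]
    | s :: rest => by
        have hG := sum_Mf_graftings lam mu w t s
        have hGL := sum_MfList_graftingsList lam mu w t rest
        rw [RT.graftingsList]
        simp only [List.map_append, List.map_map, List.sum_append]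
        have h1 : ((RT.graftings t s).map ((MfList lam mu w) ∘ fun s' => s' :: rest))
            = ((RT.graftings t s).map (fun s' => Mf lam mu w s' * MfList lam mu w rest)) := by
          refine List.map_congr_left (fun u _ => ?_)
          simp only [Function.comp_apply, MfList]
        have h2 : ((RT.graftingsList t rest).map ((MfList lam mu w) ∘ fun r => s :: r))
            = ((RT.graftingsList t rest).map (fun r => Mf lam mu w s * MfList lam mu w r)) := by
          refine List.map_congr_left (fun r _ => ?_)
          simp only [Function.comp_apply, MfList]
        rw [h1, h2, sum_map_mul_right, sum_map_mul_left, hG, hGL]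
        rw [MfList, RT.degListN, List.length_cons]
        push_cast
        ring
end

end PhiAux3
open PhiAux PhiAux2 PhiAux3

/-- Let `g_CK^J` be the free pre-Lie algebra of rooted trees decorated by `J ⊆ ℕ*` and
`φ : g_CK^J → g_FdB` the unique pre-Lie morphism sending `•_j` to `e_j`, where
`e_i ∘ e_j = (λj−μ) e_{i+j}`. Then for every decorated rooted tree `t`,
`φ(t) = μ_t e_{|t|}` for some scalar `μ_t`, where `|t|` is the sum of the decorations of the
vertices of `t`, and `μ_t` satisfies: `μ_{•_j} = 1`, and if `t = B_j(t_1⋯t_m)` then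
`μ_t = μ_{t_1}⋯μ_{t_m} · (λj−μ)(λj)(λj+μ)⋯(λj+(m−2)μ)`. -/
theorem phi_tree_eq_scalar_smul_basis (K : Type*) [Field K] [CharZero K] (lam mu : K)
    (J : Set ℕ+)
    (φ : (RT J →₀ K) →ₗ[K] (ℕ+ →₀ K))
    (hgen : ∀ j : J, φ (Finsupp.single (RT.node j []) 1) = Finsupp.single (j : ℕ+) 1)
    (hmor : ∀ x y : RT J →₀ K, φ (gprod K x y) = fdbMul K lam mu (φ x) (φ y)) :
    ∃ M : RT J → K,
      (∀ j : J, M (RT.node j []) = 1) ∧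
      (∀ (j : J) (c : List (RT J)), M (RT.node j c) =
        (c.map M).prod *
          ∏ k ∈ Finset.range c.length,
            (lam * (((j : ℕ+) : ℕ) : K) + ((k : K) - 1) * mu)) ∧
      (∀ t : RT J, φ (Finsupp.single t 1) =
        Finsupp.single (RT.deg (Subtype.val : J → ℕ+) t) (M t)) := by
  set w := (Subtype.val : J → ℕ+) with hw
  refine ⟨Mf lam mu w, ?_, ?_, ?_⟩
  · intro j
    simp [Mf, MfList, prodP]
  · intro j c
    rw [Mf, MfList_eq_prod, prodP]
  · have key : ∀ n : ℕ, ∀ t : RT J,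
        2 ^ RT.degN w t + rootLen t < n →
        φ (Finsupp.single t 1) = Finsupp.single (RT.deg w t) (Mf lam mu w t) := by
      intro n
      induction n with
      | zero => intro t h; exact absurd h (Nat.not_lt_zero _)
      | succ n ih =>
        rintro ⟨j, c⟩ ht
        cases c with
        | nil =>
          have hdeg : RT.deg w (RT.node j []) = (j : ℕ+) := by
            apply Subtype.ext
            simp [RT.deg, RT.degN, RT.degListN, hw]
            rfl
          have hM1 : Mf lam mu w (RT.node j []) = 1 := by simp [Mf, MfList, prodP]
          rw [hgen j, hdeg, hM1]
        | cons t₀ c =>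
          -- notation
          set s : RT J := RT.node j c with hs
          set T : RT J := RT.node j (t₀ :: c) with hT
          have hds : RT.degN w T = RT.degN w t₀ + RT.degN w s := by
            simp only [hT, hs, RT.degN, RT.degListN]; omega
          have ht' : 2 ^ RT.degN w T + (c.length + 1) < n + 1 := by
            simpa [hT, rootLen] using ht
          have hpos0 := RT.degN_pos w t₀
          have hposs := RT.degN_pos w s
          -- measure bounds
          have hlt1 : 2 ^ RT.degN w t₀ + rootLen t₀ < n := by
            have h1 := rootLen_lt_degN w t₀
            have h2 := Nat.lt_two_pow_self (n := RT.degN w t₀)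
            have h3 : 2 ^ RT.degN w t₀ * 2 ≤ 2 ^ RT.degN w T := by
              rw [← pow_succ]
              exact Nat.pow_le_pow_right (by norm_num) (by omega)
            omega
          have hlt2 : 2 ^ RT.degN w s + rootLen s < n := by
            have h1 := rootLen_lt_degN w s
            have h2 := Nat.lt_two_pow_self (n := RT.degN w s)
            have h3 : 2 ^ RT.degN w s * 2 ≤ 2 ^ RT.degN w T := by
              rw [← pow_succ]
              exact Nat.pow_le_pow_right (by norm_num) (by omega)
            omega
          have hdegGL : ∀ c' ∈ RT.graftingsList t₀ c,
              RT.degN w (RT.node j c') = RT.degN w T := by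
            intro c' hc'
            have := degListN_graftingsList w t₀ c c' hc'
            simp only [hT, RT.degN, RT.degListN]
            omega
          have hlt3 : ∀ c' ∈ RT.graftingsList t₀ c,
              2 ^ RT.degN w (RT.node j c') + rootLen (RT.node j c') < n := by
            intro c' hc'
            rw [hdegGL c' hc']
            have := length_graftingsList t₀ c c' hc'
            simp only [rootLen, this]
            omega
          -- the morphism equation
          have hm := hmor (Finsupp.single t₀ 1) (Finsupp.single s 1)
          rw [gprod_single] at hm
          rw [hs, RT.graftings, ← hs, ← hT] at hm
          simp only [List.map_cons, List.map_map, List.sum_cons, map_add,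
            map_list_sum] at hm
          rw [ih t₀ hlt1, ih s hlt2, fdbMul_single] at hm
          have hmc : ((RT.graftingsList t₀ c).map
                (φ ∘ (fun u => Finsupp.single u (1:K)) ∘ fun c' => RT.node j c'))
              = ((RT.graftingsList t₀ c).map
                (fun c' => Finsupp.single (RT.deg w T) (Mf lam mu w (RT.node j c')))) := by
            refine List.map_congr_left (fun c' hc' => ?_)
            have h1 : RT.deg w (RT.node j c') = RT.deg w T :=
              Subtype.ext (hdegGL c' hc')
            simp only [Function.comp_apply]
            rw [ih (RT.node j c') (hlt3 c' hc'), h1]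
          rw [hmc, sum_map_single] at hm
          have hdsum : RT.deg w t₀ + RT.deg w s = RT.deg w T :=
            Subtype.ext hds.symm
          rw [hdsum] at hm
          have hcoe : ((RT.deg w s : ℕ) : K) = ((RT.degN w s : ℕ) : K) := rfl
          rw [hcoe] at hm
          -- conclude
          have hval : Mf lam mu w t₀ * Mf lam mu w s * (lam * ((RT.degN w s : ℕ) : K) - mu)
              - ((RT.graftingsList t₀ c).map (fun c' => Mf lam mu w (RT.node j c'))).sum
              = Mf lam mu w T := by
            have hG := sum_Mf_graftings lam mu w t₀ s
            rw [hs, RT.graftings, ← hs, ← hT] at hG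
            simp only [List.map_cons, List.map_map, List.sum_cons, Function.comp_def] at hG
            linear_combination -hG
          rw [← hval, Finsupp.single_sub]
          exact eq_sub_of_add_eq hm
    intro t
    exact key (2 ^ RT.degN w t + rootLen t + 1) t (by omega)
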